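/- Let H = (V,E) be a hypergraph and let y : E → ℝ_{>0}. Then the vector z ∈ ℝ^E defined by z(e) := y(e) / (y(e) + Σ_{f ∈ N(e)} y(f)) lies in the matching polytope of H, i.e., z is a convex combination of the characteristic (0/1-indicator) vectors of matchings of H. -/

import Mathlib

open Finset

section Aux

variable {α : Type*} [DecidableEq α]

noncomputable def zfun (E : Finset (Finset α)) (y : Finset α → ℝ) (e : Finset α) : ℝ :=
  y e / (y e + ∑ f ∈ E.filter (fun f => f ≠ e ∧ (f ∩ e).Nonempty), y f)

def IsRep (E : Finset (Finset α)) (z : Finset α → ℝ) : Prop :=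
  ∃ (q : ℕ) (M : Fin q → Finset (Finset α)) (lam : Fin q → ℝ),
    (∀ i, M i ⊆ E) ∧
    (∀ i, ∀ e₁ ∈ M i, ∀ e₂ ∈ M i, e₁ ≠ e₂ → Disjoint e₁ e₂) ∧
    (∀ i, 0 ≤ lam i) ∧ (∑ i, lam i = 1) ∧
    (∀ e ∈ E, z e = ∑ i, if e ∈ M i then lam i else 0)

lemma isRep_of_fintype {E : Finset (Finset α)} {z : Finset α → ℝ}
    {ι : Type*} [Fintype ι] (M : ι → Finset (Finset α)) (lam : ι → ℝ)
    (h1 : ∀ i, M i ⊆ E)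
    (h2 : ∀ i, ∀ e₁ ∈ M i, ∀ e₂ ∈ M i, e₁ ≠ e₂ → Disjoint e₁ e₂)
    (h3 : ∀ i, 0 ≤ lam i) (h4 : ∑ i, lam i = 1)
    (h5 : ∀ e ∈ E, z e = ∑ i, if e ∈ M i then lam i else 0) :
    IsRep E z := by
  obtain ⟨σ⟩ : Nonempty (ι ≃ Fin (Fintype.card ι)) := ⟨Fintype.equivFin ι⟩
  refine ⟨Fintype.card ι, M ∘ σ.symm, lam ∘ σ.symm, fun i => h1 _, fun i => h2 _,
    fun i => h3 _, ?_, ?_⟩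
  · exact (Equiv.sum_comp σ.symm lam).trans h4
  · intro e he
    rw [h5 e he]
    exact (Equiv.sum_comp σ.symm (fun i => if e ∈ M i then lam i else 0)).symm

lemma zfun_denom_pos {E : Finset (Finset α)} {y : Finset α → ℝ}
    (hy : ∀ f ∈ E, 0 < y f) {e : Finset α} (he : e ∈ E) :
    0 < y e + ∑ f ∈ E.filter (fun f => f ≠ e ∧ (f ∩ e).Nonempty), y f :=
  add_pos_of_pos_of_nonneg (hy e he)
    (Finset.sum_nonneg fun f hf => (hy f (mem_of_mem_filter f hf)).le)

lemma zfun_pos {E : Finset (Finset α)} {y : Finset α → ℝ}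
    (hy : ∀ f ∈ E, 0 < y f) {e : Finset α} (he : e ∈ E) :
    0 < zfun E y e :=
  div_pos (hy e he) (zfun_denom_pos hy he)

lemma zfun_le_one {E : Finset (Finset α)} {y : Finset α → ℝ}
    (hy : ∀ f ∈ E, 0 < y f) {e : Finset α} (he : e ∈ E) :
    zfun E y e ≤ 1 := by
  rw [zfun, div_le_one (zfun_denom_pos hy he)]
  exact le_add_of_nonneg_right
    (Finset.sum_nonneg fun f hf => (hy f (mem_of_mem_filter f hf)).le)

lemma zfun_mono {E F : Finset (Finset α)} {y : Finset α → ℝ}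
    (hy : ∀ f ∈ E, 0 < y f) (hFE : F ⊆ E) {e : Finset α} (heF : e ∈ F) :
    zfun E y e ≤ zfun F y e := by
  have heE : e ∈ E := hFE heF
  unfold zfun
  gcongr
  · exact (hy e heE).le
  · exact zfun_denom_pos (fun f hf => hy f (hFE hf)) heF
  · intro f hf _
    exact (hy f (mem_of_mem_filter f hf)).le

lemma exists_rep_ge (E : Finset (Finset α)) (y : Finset α → ℝ) :
    (∀ f ∈ E, 0 < y f) →
    ∃ p : Finset α → ℝ, IsRep E p ∧ ∀ e ∈ E, zfun E y e ≤ p e := by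
  induction E using Finset.strongInduction with
  | _ E IH =>
  intro hy
  rcases E.eq_empty_or_nonempty with rfl | hne
  · exact ⟨fun _ => 0,
      ⟨1, fun _ => ∅, fun _ => 1, fun i => subset_refl _, by simp, by simp, by simp, by simp⟩,
      by simp⟩
  set Y := ∑ g ∈ E, y g with hYdef
  have hY : 0 < Y := Finset.sum_pos hy hne
  have key : ∀ g ∈ E, ∃ p, IsRep (E.filter fun f => f ≠ g ∧ f ∩ g = ∅) p ∧
      ∀ e ∈ E.filter (fun f => f ≠ g ∧ f ∩ g = ∅),
        zfun (E.filter fun f => f ≠ g ∧ f ∩ g = ∅) y e ≤ p e := by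
    intro g hg
    refine IH _ ((Finset.ssubset_iff_of_subset (filter_subset _ _)).2 ⟨g, hg, by simp⟩)
      (fun f hf => hy f (mem_of_mem_filter f hf))
  choose p hrep hbd using key
  simp only [IsRep] at hrep
  choose q M lam hMsub hMdisj hlam hsum hval using hrep
  classical
  set ι := (g : {x // x ∈ E}) × Fin (q g.1 g.2) with hι
  set M' : ι → Finset (Finset α) := fun i => insert i.1.1 (M i.1.1 i.1.2 i.2) with hM'
  set lam' : ι → ℝ := fun i => (y i.1.1 / Y) * lam i.1.1 i.1.2 i.2 with hlam'
  set p0 : Finset α → ℝ := fun e => ∑ i : ι, if e ∈ M' i then lam' i else 0 with hp0def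
  have hMsub' : ∀ i : ι, M' i ⊆ E := by
    rintro ⟨⟨g, hg⟩, j⟩
    exact insert_subset hg ((hMsub g hg j).trans (filter_subset _ _))
  refine ⟨p0, isRep_of_fintype M' lam' hMsub' ?_ ?_ ?_ (fun e he => rfl), ?_⟩
  · -- disjointness
    rintro ⟨⟨g, hg⟩, j⟩ e₁ h₁ e₂ h₂ hne'
    rcases mem_insert.1 h₁ with h₁ | h₁ <;> rcases mem_insert.1 h₂ with h₂ | h₂
    · exact absurd (h₁.trans h₂.symm) hne'
    · have h3 := (mem_filter.1 (hMsub g hg j h₂)).2.2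
      rw [h₁]
      exact (Finset.disjoint_iff_inter_eq_empty.2 h3).symm
    · have h3 := (mem_filter.1 (hMsub g hg j h₁)).2.2
      rw [h₂]
      exact Finset.disjoint_iff_inter_eq_empty.2 h3
    · exact hMdisj g hg j e₁ h₁ e₂ h₂ hne'
  · rintro ⟨⟨g, hg⟩, j⟩
    exact mul_nonneg (div_nonneg (hy g hg).le hY.le) (hlam g hg j)
  · -- weights sum to 1
    rw [← Finset.univ_sigma_univ, Finset.sum_sigma]
    have : ∀ g : {x // x ∈ E}, (∑ j : Fin (q g.1 g.2), lam' ⟨g, j⟩) = y g.1 / Y := by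
      intro g
      simp only [hlam']
      rw [← Finset.mul_sum, hsum g.1 g.2, mul_one]
    rw [Finset.sum_congr rfl (fun g _ => this g)]
    rw [Finset.univ_eq_attach, Finset.sum_attach E (fun g => y g / Y), ← Finset.sum_div]
    exact div_self hY.ne'
  · -- the lower bound
    intro e he
    have hp0 : p0 e = ∑ g ∈ E.attach, ((y g.1 / Y) *
        (if g.1 = e then 1 else
          if e ∈ E.filter (fun f => f ≠ g.1 ∧ f ∩ g.1 = ∅) then p g.1 g.2 e else 0)) := by
      simp only [hp0def]
      rw [← Finset.univ_sigma_univ, Finset.sum_sigma, Finset.univ_eq_attach]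
      refine Finset.sum_congr rfl (fun g _ => ?_)
      by_cases hge : g.1 = e
      · have : ∀ j, e ∈ M' ⟨g, j⟩ := fun j => by
          rw [hM']; exact mem_insert.2 (Or.inl hge.symm)
        simp only [this, if_true, if_pos hge, hlam']
        rw [← Finset.mul_sum, hsum g.1 g.2, mul_one]
      · by_cases heg : e ∈ E.filter (fun f => f ≠ g.1 ∧ f ∩ g.1 = ∅)
        · rw [if_neg hge, if_pos heg, hval g.1 g.2 e heg, Finset.mul_sum]
          refine Finset.sum_congr rfl (fun j _ => ?_)
          have : e ∈ M' ⟨g, j⟩ ↔ e ∈ M g.1 g.2 j := by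
            rw [hM', mem_insert]
            constructor
            · rintro (h | h)
              · exact absurd h.symm hge
              · exact h
            · exact Or.inr
          by_cases hm : e ∈ M g.1 g.2 j
          · rw [if_pos (this.2 hm), if_pos hm, hlam']
          · rw [if_neg (fun h => hm (this.1 h)), if_neg hm, mul_zero]
        · have : ∀ j, e ∉ M' ⟨g, j⟩ := by
            intro j hmem
            rcases mem_insert.1 hmem with h | h
            · exact hge h.symm
            · exact heg (hMsub g.1 g.2 j h)
          simp only [if_neg (this _), if_neg hge, if_neg heg, mul_zero, Finset.sum_const_zero]
    rw [hp0]
    set z := zfun E y e with hzdef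
    have hstep : ∀ g ∈ E.attach, (y g.1 / Y) *
        (if g.1 = e then 1 else if g.1 ∩ e = ∅ then z else 0) ≤ (y g.1 / Y) *
        (if g.1 = e then 1 else
          if e ∈ E.filter (fun f => f ≠ g.1 ∧ f ∩ g.1 = ∅) then p g.1 g.2 e else 0) := by
      rintro ⟨g, hg⟩ _
      simp only
      refine mul_le_mul_of_nonneg_left ?_ (div_nonneg (hy g hg).le hY.le)
      by_cases hge : g = e
      · rw [if_pos hge, if_pos hge]
      · rw [if_neg hge, if_neg hge]
        by_cases hdis : g ∩ e = ∅
        · have heg : e ∈ E.filter (fun f => f ≠ g ∧ f ∩ g = ∅) := by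
            rw [mem_filter]
            exact ⟨he, fun h => hge h.symm, by rwa [Finset.inter_comm]⟩
          rw [if_pos heg, if_pos hdis]
          calc z ≤ zfun (E.filter (fun f => f ≠ g ∧ f ∩ g = ∅)) y e :=
                zfun_mono hy (filter_subset _ _) heg
            _ ≤ p g hg e := hbd g hg e heg
        · have heg : e ∉ E.filter (fun f => f ≠ g ∧ f ∩ g = ∅) := by
            rw [mem_filter]
            rintro ⟨-, -, h⟩
            exact hdis (by rwa [Finset.inter_comm])
          rw [if_neg heg, if_neg hdis]
    refine le_trans (le_of_eq ?_) (Finset.sum_le_sum hstep)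
    -- remains: z = ∑ g ∈ E.attach, (y g/Y) * B g
    rw [Finset.sum_attach E (fun g => (y g / Y) * (if g = e then 1 else if g ∩ e = ∅ then z else 0))]
    set W := ∑ f ∈ E.filter (fun f => f ≠ e ∧ (f ∩ e).Nonempty), y f with hW
    set D := ∑ f ∈ E.filter (fun f => f ≠ e ∧ f ∩ e = ∅), y f with hD
    have hfilt : E.filter (fun f => ¬(f ≠ e ∧ (f ∩ e).Nonempty))
        = insert e (E.filter (fun f => f ≠ e ∧ f ∩ e = ∅)) := by
      ext f
      simp only [mem_filter, mem_insert, not_and, Finset.not_nonempty_iff_eq_empty]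
      constructor
      · rintro ⟨hf, h⟩
        by_cases hfe : f = e
        · exact Or.inl hfe
        · exact Or.inr ⟨hf, hfe, h hfe⟩
      · rintro (rfl | ⟨hf, hfe, h⟩)
        · exact ⟨he, fun h' => absurd rfl h'⟩
        · exact ⟨hf, fun _ => h⟩
    have henotin : e ∉ E.filter (fun f => f ≠ e ∧ f ∩ e = ∅) := by
      simp [mem_filter]
    have hYsplit : Y = W + (y e + D) := by
      rw [hYdef, ← Finset.sum_filter_add_sum_filter_not E (fun f => f ≠ e ∧ (f ∩ e).Nonempty), hW, hfilt, Finset.sum_insert henotin, hD]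
    have hsum2 : ∑ g ∈ E, (y g / Y) * (if g = e then 1 else if g ∩ e = ∅ then z else 0)
        = y e / Y + D * z / Y := by
      rw [← Finset.sum_filter_add_sum_filter_not E (fun f => f ≠ e ∧ (f ∩ e).Nonempty), hfilt,
        Finset.sum_insert henotin]
      have h1 : ∀ g ∈ E.filter (fun f => f ≠ e ∧ (f ∩ e).Nonempty),
          (y g / Y) * (if g = e then 1 else if g ∩ e = ∅ then z else 0) = 0 := by
        intro g hg
        obtain ⟨-, hge, hne'⟩ := mem_filter.1 hg
        rw [if_neg hge, if_neg (Finset.nonempty_iff_ne_empty.1 hne'), mul_zero]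
      have h2 : ∀ g ∈ E.filter (fun f => f ≠ e ∧ f ∩ e = ∅),
          (y g / Y) * (if g = e then 1 else if g ∩ e = ∅ then z else 0) = y g / Y * z := by
        intro g hg
        obtain ⟨-, hge, hdis⟩ := mem_filter.1 hg
        rw [if_neg hge, if_pos hdis]
      rw [Finset.sum_congr rfl h1, Finset.sum_congr rfl h2, Finset.sum_const_zero, if_pos rfl,
        mul_one]
      have h3 : ∑ g ∈ E.filter (fun f => f ≠ e ∧ f ∩ e = ∅), y g / Y * z = D * z / Y := by
        simp only [div_mul_eq_mul_div]
        rw [← Finset.sum_div, ← Finset.sum_mul, hD]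
      rw [h3]
      ring
    rw [hsum2]
    have hd : 0 < y e + W := by rw [hW]; exact zfun_denom_pos hy he
    have hz1 : z * (y e + W) = y e := by
      rw [hzdef, zfun, hW]
      exact div_mul_cancel₀ (y e) hd.ne'
    have h4 : z * Y = y e + D * z := by
      calc z * Y = z * (y e + W) + z * D := by rw [hYsplit]; ring
        _ = y e + D * z := by rw [hz1]; ring
    rw [← add_div, ← h4, mul_div_cancel_right₀ z hY.ne']

lemma isRep_congr {E : Finset (Finset α)} {z z' : Finset α → ℝ}
    (h : IsRep E z) (hzz : ∀ e ∈ E, z' e = z e) : IsRep E z' := by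
  obtain ⟨q, M, lam, h1, h2, h3, h4, h5⟩ := h
  exact ⟨q, M, lam, h1, h2, h3, h4, fun e he => (hzz e he).trans (h5 e he)⟩

lemma isRep_scale {E : Finset (Finset α)} {z : Finset α → ℝ}
    (h : IsRep E z) {a : Finset α} {t : ℝ} (ht0 : 0 ≤ t) (ht1 : t ≤ 1) :
    IsRep E (fun e => if e = a then t * z e else z e) := by
  obtain ⟨q, M, lam, h1, h2, h3, h4, h5⟩ := h
  refine isRep_of_fintype (ι := Fin q ⊕ Fin q)
    (Sum.elim M (fun i => (M i).erase a))
    (Sum.elim (fun i => t * lam i) (fun i => (1 - t) * lam i)) ?_ ?_ ?_ ?_ ?_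
  · rintro (i | i)
    · exact h1 i
    · exact (erase_subset _ _).trans (h1 i)
  · rintro (i | i) e₁ h₁ e₂ h₂ hne
    · exact h2 i e₁ h₁ e₂ h₂ hne
    · exact h2 i e₁ (mem_of_mem_erase h₁) e₂ (mem_of_mem_erase h₂) hne
  · rintro (i | i)
    · exact mul_nonneg ht0 (h3 i)
    · exact mul_nonneg (by linarith) (h3 i)
  · rw [Fintype.sum_sum_type]
    simp only [Sum.elim_inl, Sum.elim_inr]
    rw [← Finset.mul_sum, ← Finset.mul_sum, h4]
    ring
  · intro e he
    rw [Fintype.sum_sum_type]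
    simp only [Sum.elim_inl, Sum.elim_inr]
    change (if e = a then t * z e else z e) = (∑ i, if e ∈ M i then t * lam i else 0) +
      ∑ i, if e ∈ (M i).erase a then (1 - t) * lam i else 0
    by_cases hea : e = a
    · subst hea
      have hz2 : ∀ i : Fin q, (if e ∈ (M i).erase e then (1 - t) * lam i else 0) = 0 := by
        intro i
        rw [if_neg (fun h => (mem_erase.1 h).1 rfl)]
      rw [Finset.sum_congr rfl (fun i _ => hz2 i), Finset.sum_const_zero, add_zero, if_pos rfl,
        h5 e he, Finset.mul_sum]
      refine Finset.sum_congr rfl (fun i _ => ?_)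
      by_cases hm : e ∈ M i
      · rw [if_pos hm, if_pos hm]
      · rw [if_neg hm, if_neg hm, mul_zero]
    · rw [if_neg hea, h5 e he, ← Finset.sum_add_distrib]
      refine Finset.sum_congr rfl (fun i _ => ?_)
      have hiff : e ∈ (M i).erase a ↔ e ∈ M i := by
        rw [mem_erase]
        exact ⟨fun h => h.2, fun h => ⟨hea, h⟩⟩
      by_cases hm : e ∈ M i
      · rw [if_pos hm, if_pos hm, if_pos (hiff.2 hm)]
        ring
      · rw [if_neg hm, if_neg hm, if_neg (fun h => hm (hiff.1 h)), add_zero]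

lemma isRep_downclose {E : Finset (Finset α)} {p z : Finset α → ℝ}
    (hrep : IsRep E p) (hzp : ∀ e ∈ E, 0 < z e ∧ z e ≤ p e) :
    ∀ F : Finset (Finset α), F ⊆ E → IsRep E (fun e => if e ∈ F then z e else p e) := by
  intro F
  induction F using Finset.induction_on with
  | empty => intro _; exact isRep_congr hrep (by simp)
  | @insert a F haF IH =>
    intro hsub
    have haE : a ∈ E := hsub (mem_insert_self a F)
    have hFE : F ⊆ E := (subset_insert a F).trans hsub
    have hpa : 0 < p a := lt_of_lt_of_le (hzp a haE).1 (hzp a haE).2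
    have IH' := IH hFE
    have hscaled := isRep_scale IH' (a := a) (t := z a / p a)
      (div_nonneg (hzp a haE).1.le hpa.le) ((div_le_one hpa).2 (hzp a haE).2)
    refine isRep_congr hscaled ?_
    intro e heE
    by_cases hea : e = a
    · subst hea
      simp only [if_pos rfl, if_pos (mem_insert_self e F), if_neg haF]
      rw [div_mul_cancel₀ (z e) hpa.ne']
      simp
    · simp only [if_neg hea, mem_insert]
      by_cases hef : e ∈ F
      · rw [if_pos (Or.inr hef), if_pos hef]
      · rw [if_neg (fun h => h.elim hea hef), if_neg hef]

end Aux

/-- Let `H = (V, E)` be a hypergraph and `y : E → ℝ_{>0}`. Then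
the vector `z` with `z e = y e / (y e + ∑_{f ∈ N(e)} y f)` is a convex combination
of characteristic vectors of matchings of `H`, i.e., it lies in the matching
polytope of `H`. -/
theorem exponential_clocks_vector_in_matching_polytope
    {α : Type*} [DecidableEq α] (V : Finset α) (E : Finset (Finset α))
    (hE : ∀ e ∈ E, e.Nonempty ∧ e ⊆ V)
    (y : Finset α → ℝ) (hy : ∀ e ∈ E, 0 < y e)
    (z : Finset α → ℝ)
    (hz : ∀ e ∈ E, z e =
      y e / (y e + ∑ f ∈ E.filter (fun f => f ≠ e ∧ (f ∩ e).Nonempty), y f)) :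
    ∃ (q : ℕ) (M : Fin q → Finset (Finset α)) (lam : Fin q → ℝ),
      (∀ i, M i ⊆ E) ∧
      (∀ i, ∀ e₁ ∈ M i, ∀ e₂ ∈ M i, e₁ ≠ e₂ → Disjoint e₁ e₂) ∧
      (∀ i, 0 ≤ lam i) ∧ (∑ i, lam i = 1) ∧
      (∀ e ∈ E, z e = ∑ i, if e ∈ M i then lam i else 0) := by
  obtain ⟨p, hrep, hbd⟩ := exists_rep_ge E y hy
  have hzz : ∀ e ∈ E, z e = zfun E y e := fun e he => hz e he
  have hzp : ∀ e ∈ E, 0 < z e ∧ z e ≤ p e := by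
    intro e he
    rw [hzz e he]
    exact ⟨zfun_pos hy he, hbd e he⟩
  have hfinal := isRep_downclose hrep hzp E (subset_refl E)
  exact isRep_congr hfinal (fun e he => by rw [if_pos he])
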